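/- Let λ ≠ 0 and let f_λ : ℤ → ℝ be defined by f_λ(x) = e^{-α_λ|x|}/ν_λ for λ > 0 and f_λ(x) = (-1)^x e^{-α_λ|x|}/ν_λ for λ < 0, where α_λ = log(√(1+λ²)+|λ|) and ν_λ² = √(1+λ²)/|λ|. Then f_λ ∈ ℓ²(ℤ) and ‖f_λ‖ = 1. -/

import Mathlib

noncomputable def magneticEigenfunction (lam : ℝ) (x : ℤ) : ℝ :=
  (if 0 < lam then 1 else (-1 : ℝ) ^ x) *
    Real.exp (-(Real.log (Real.sqrt (1 + lam ^ 2) + |lam|)) * |x|) /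
      Real.sqrt (Real.sqrt (1 + lam ^ 2) / |lam|)

theorem magneticEigenfunction_normalized (lam : ℝ) (hlam : lam ≠ 0) :
    Summable (fun x : ℤ => (magneticEigenfunction lam x) ^ 2) ∧
    ∑' x : ℤ, (magneticEigenfunction lam x) ^ 2 = 1 := by
  set a := Real.sqrt (1 + lam ^ 2) with ha_def
  have hl : 0 < |lam| := abs_pos.mpr hlam
  have ha2 : a ^ 2 = 1 + lam ^ 2 := Real.sq_sqrt (by positivity)
  have ha1 : 1 ≤ a := by
    rw [ha_def]
    nlinarith [Real.sq_sqrt (show (0:ℝ) ≤ 1 + lam ^ 2 by positivity),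
      Real.sqrt_nonneg (1 + lam ^ 2)]
  set s := a + |lam| with hs_def
  have hs1 : 1 < s := by nlinarith
  have hs0 : 0 < s := by linarith
  set r := (1 / s) ^ 2 with hr_def
  have hr0 : 0 ≤ r := by positivity
  have hr1 : r < 1 := by
    rw [hr_def]
    have : 1 / s < 1 := by rw [div_lt_one hs0]; exact hs1
    nlinarith [one_div_pos.mpr hs0]
  set C := a / |lam| with hC_def
  have hC0 : 0 < C := by positivity
  have key : ∀ x : ℤ, (magneticEigenfunction lam x) ^ 2 = r ^ x.natAbs / C := by
    intro x
    have hsign : (if 0 < lam then (1:ℝ) else (-1 : ℝ) ^ x) ^ 2 = 1 := by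
      split_ifs
      · norm_num
      · rw [sq, ← zpow_add₀ (by norm_num : (-1:ℝ) ≠ 0), show x + x = 2 * x by ring,
          zpow_mul]
        norm_num
    have habs : ((|x| : ℤ) : ℝ) = (x.natAbs : ℝ) := (Nat.cast_natAbs x).symm
    have hexp : Real.exp (-(Real.log s) * ((|x| : ℤ) : ℝ)) ^ 2 = r ^ x.natAbs := by
      rw [habs, show -(Real.log s) * (x.natAbs : ℝ) = (x.natAbs : ℝ) * (-Real.log s) by ring,
        Real.exp_nat_mul, Real.exp_neg, Real.exp_log hs0, ← pow_mul, ← pow_mul,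
        Nat.mul_comm]
      norm_num
    have hnu : Real.sqrt C ^ 2 = C := Real.sq_sqrt (le_of_lt hC0)
    rw [magneticEigenfunction, div_pow, mul_pow, ← ha_def, ← hs_def, ← hC_def, hsign, hexp,
      one_mul, hnu]
  have hgeom : Summable (fun n : ℕ => r ^ n / C) :=
    (summable_geometric_of_lt_one hr0 hr1).div_const C
  have hsum1 : Summable (fun n : ℕ => (magneticEigenfunction lam (n : ℤ)) ^ 2) := by
    apply hgeom.congr; intro n; rw [key]; norm_num
  have hsum2 : Summable (fun n : ℕ => (magneticEigenfunction lam (-(n + 1) : ℤ)) ^ 2) := by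
    apply (hgeom.comp_injective Nat.succ_injective).congr
    intro n
    have hn : (-((n:ℤ) + 1)).natAbs = n + 1 := by
      rw [Int.natAbs_neg, show ((n:ℤ) + 1) = ((n + 1 : ℕ) : ℤ) by push_cast; ring,
        Int.natAbs_natCast]
    rw [key, hn]
    rfl
  have hS : Summable (fun x : ℤ => (magneticEigenfunction lam x) ^ 2) :=
    Summable.of_nat_of_neg_add_one hsum1 hsum2
  refine ⟨hS, ?_⟩
  rw [tsum_of_nat_of_neg_add_one (f := fun x : ℤ => magneticEigenfunction lam x ^ 2) hsum1 hsum2]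
  have t1 : ∑' n : ℕ, (magneticEigenfunction lam (n : ℤ)) ^ 2 = (1 / (1 - r)) / C := by
    rw [tsum_congr (fun n => by rw [key]; norm_num : ∀ n : ℕ,
      (magneticEigenfunction lam (n : ℤ)) ^ 2 = r ^ n / C)]
    rw [tsum_div_const, tsum_geometric_of_lt_one hr0 hr1]
    rw [one_div]
  have t2 : ∑' n : ℕ, (magneticEigenfunction lam (-(n + 1) : ℤ)) ^ 2 = (r / (1 - r)) / C := by
    have : ∀ n : ℕ, (magneticEigenfunction lam (-(n + 1) : ℤ)) ^ 2 = r * r ^ n / C := by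
      intro n
      have hn : (-((n:ℤ) + 1)).natAbs = n + 1 := by
        rw [Int.natAbs_neg, show ((n:ℤ) + 1) = ((n + 1 : ℕ) : ℤ) by push_cast; ring,
          Int.natAbs_natCast]
      rw [key, hn, pow_succ, mul_comm (r ^ n) r]
    rw [tsum_congr this]
    simp_rw [mul_div_assoc]
    rw [tsum_mul_left, tsum_div_const, tsum_geometric_of_lt_one hr0 hr1]
    field_simp
  rw [t1, t2]
  have h1 : s ^ 2 - 1 = 2 * |lam| * s := by
    rw [hs_def]; nlinarith [ha2, sq_abs lam]
  have h2 : s ^ 2 + 1 = 2 * a * s := by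
    rw [hs_def]; nlinarith [ha2, sq_abs lam]
  have hr1' : (1:ℝ) - r ≠ 0 := by linarith
  have hCne : C ≠ 0 := ne_of_gt hC0
  have hsne : s ≠ 0 := ne_of_gt hs0
  have hane : a ≠ 0 := by linarith
  have hlne : |lam| ≠ 0 := ne_of_gt hl
  have h3 : (1:ℝ) - (1/s)^2 ≠ 0 := by
    have := hr1; rw [hr_def] at this; linarith
  rw [hr_def, hC_def]
  field_simp
  rw [div_eq_iff (by
    intro h
    rw [h1] at h
    exact (by positivity : (0:ℝ) < 2 * |lam| * s).ne' h)]
  linear_combination |lam| * h2 - a * h1
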